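/- Assume joint-consistency for (s,a) ∈ {(0,0),(0,2),(1,0)}; trial exchangeability over A for (1,0) with trial positivity for a=0; external exchangeability over A for (0,0) and (0,2) with external positivity for a=0,2; external-source positivity; transportability of conditional relative effects under s=0: E[Y^{0,2}|X=x,S=1]/E[Y^{0,0}|X=x,S=1] = E[Y^{0,2}|X=x,S=0]/E[Y^{0,0}|X=x,S=0]; and no causal interaction between S and A on the ratio scale: E[Y^{1,2}|X=x,S=1]/E[Y^{1,0}|X=x,S=1] = E[Y^{0,2}|X=x,S=1]/E[Y^{0,0}|X=x,S=1], both for every x with P(X=x,S=1)>0 and P(X=x,S=0)>0, with all stated conditional means nonzero. Then E[Y^{1,2} | S=1] = ρ := Σ_x E[Y|X=x,S=1,A=0]·(E[Y|X=x,S=0,A=2]/E[Y|X=x,S=0,A=0])·P(X=x|S=1). -/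
import Mathlib


open Finset
open scoped Classical

noncomputable def pr {Ω : Type*} [Fintype Ω] (P : Ω → ℝ) (E : Ω → Prop) : ℝ :=
  ∑ ω, if E ω then P ω else 0

noncomputable def cexp {Ω : Type*} [Fintype Ω] (P : Ω → ℝ) (Y : Ω → ℝ) (E : Ω → Prop) : ℝ :=
  (∑ ω, if E ω then Y ω * P ω else 0) / pr P E

noncomputable def cpr {Ω : Type*} [Fintype Ω] (P : Ω → ℝ) (E F : Ω → Prop) : ℝ :=
  pr P (fun ω => E ω ∧ F ω) / pr P F


section Helpers
variable {Ω : Type*} [Fintype Ω]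

noncomputable def wsum (P Y : Ω → ℝ) (E : Ω → Prop) : ℝ :=
  ∑ ω, if E ω then Y ω * P ω else 0

lemma cexp_eq (P Y : Ω → ℝ) (E : Ω → Prop) : cexp P Y E = wsum P Y E / pr P E := rfl

lemma pr_nonneg (P : Ω → ℝ) (hP : ∀ ω, 0 ≤ P ω) (E : Ω → Prop) : 0 ≤ pr P E := by
  unfold pr
  exact Finset.sum_nonneg fun ω _ => by split <;> simp [hP ω]

lemma pr_congr (P : Ω → ℝ) {E F : Ω → Prop} (h : ∀ ω, E ω ↔ F ω) : pr P E = pr P F := by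
  unfold pr; exact Finset.sum_congr rfl fun ω _ => by rw [if_congr (h ω) rfl rfl]

lemma cexp_congr (P : Ω → ℝ) (Y Z : Ω → ℝ) {E F : Ω → Prop} (h : ∀ ω, E ω ↔ F ω)
    (hYZ : ∀ ω, F ω → Y ω = Z ω) : cexp P Y E = cexp P Z F := by
  unfold cexp
  rw [pr_congr P h]
  congr 1
  refine Finset.sum_congr rfl fun ω _ => ?_
  by_cases hf : F ω
  · rw [if_pos ((h ω).2 hf), if_pos hf, hYZ ω hf]
  · rw [if_neg (fun he => hf ((h ω).1 he)), if_neg hf]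

lemma pr_mono (P : Ω → ℝ) (hP : ∀ ω, 0 ≤ P ω) {E F : Ω → Prop} (h : ∀ ω, E ω → F ω) :
    pr P E ≤ pr P F := by
  unfold pr
  refine Finset.sum_le_sum fun ω _ => ?_
  by_cases he : E ω
  · rw [if_pos he, if_pos (h ω he)]
  · rw [if_neg he]; split <;> simp [hP ω]

lemma P_eq_zero_of_pr_zero (P : Ω → ℝ) (hP : ∀ ω, 0 ≤ P ω) {E : Ω → Prop}
    (h : pr P E = 0) : ∀ ω, E ω → P ω = 0 := by
  intro ω hω
  have := (Finset.sum_eq_zero_iff_of_nonneg (fun ω _ => by split <;> simp [hP ω])).1 h ω (Finset.mem_univ ω)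
  simpa [hω] using this

end Helpers

theorem stmt13    {Ω 𝓧 : Type*} [Fintype Ω] [Fintype 𝓧]
    (P : Ω → ℝ) (hP : ∀ ω, 0 ≤ P ω) (hPsum : ∑ ω, P ω = 1)
    (X : Ω → 𝓧) (S : Ω → ℕ) (A : Ω → ℕ) (Y : Ω → ℝ)
    (Y00 Y02 Y10 Y12 : Ω → ℝ)
    (hS1 : 0 < pr P (fun ω => S ω = 1))
    (hcons00 : ∀ ω, S ω = 0 → A ω = 0 → Y00 ω = Y ω)
    (hcons02 : ∀ ω, S ω = 0 → A ω = 2 → Y02 ω = Y ω)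
    (hcons10 : ∀ ω, S ω = 1 → A ω = 0 → Y10 ω = Y ω)
    (hexch10 : ∀ x, 0 < pr P (fun ω => X ω = x ∧ S ω = 1) → cexp P Y10 (fun ω => X ω = x ∧ S ω = 1) = cexp P Y10 (fun ω => X ω = x ∧ S ω = 1 ∧ A ω = 0))
    (hpos0 : ∀ x, 0 < pr P (fun ω => X ω = x ∧ S ω = 1) → 0 < cpr P (fun ω => A ω = 0) (fun ω => X ω = x ∧ S ω = 1))
    (hexch00 : ∀ x, 0 < pr P (fun ω => X ω = x ∧ S ω = 0) → cexp P Y00 (fun ω => X ω = x ∧ S ω = 0) = cexp P Y00 (fun ω => X ω = x ∧ S ω = 0 ∧ A ω = 0))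
    (hexch02 : ∀ x, 0 < pr P (fun ω => X ω = x ∧ S ω = 0) → cexp P Y02 (fun ω => X ω = x ∧ S ω = 0) = cexp P Y02 (fun ω => X ω = x ∧ S ω = 0 ∧ A ω = 2))
    (hposext0 : ∀ x, 0 < pr P (fun ω => X ω = x ∧ S ω = 0) → 0 < cpr P (fun ω => A ω = 0) (fun ω => X ω = x ∧ S ω = 0))
    (hposext2 : ∀ x, 0 < pr P (fun ω => X ω = x ∧ S ω = 0) → 0 < cpr P (fun ω => A ω = 2) (fun ω => X ω = x ∧ S ω = 0))
    (hextpos : ∀ x, 0 < pr P (fun ω => X ω = x ∧ S ω = 1) → 0 < cpr P (fun ω => S ω = 0) (fun ω => X ω = x))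
    (htransratio : ∀ x, 0 < pr P (fun ω => X ω = x ∧ S ω = 1) → 0 < pr P (fun ω => X ω = x ∧ S ω = 0) →
      cexp P Y02 (fun ω => X ω = x ∧ S ω = 1) / cexp P Y00 (fun ω => X ω = x ∧ S ω = 1) =
      cexp P Y02 (fun ω => X ω = x ∧ S ω = 0) / cexp P Y00 (fun ω => X ω = x ∧ S ω = 0))
    (hnointer : ∀ x, 0 < pr P (fun ω => X ω = x ∧ S ω = 1) → 0 < pr P (fun ω => X ω = x ∧ S ω = 0) →
      cexp P Y12 (fun ω => X ω = x ∧ S ω = 1) / cexp P Y10 (fun ω => X ω = x ∧ S ω = 1) =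
      cexp P Y02 (fun ω => X ω = x ∧ S ω = 1) / cexp P Y00 (fun ω => X ω = x ∧ S ω = 1))
    (hne : ∀ x, 0 < pr P (fun ω => X ω = x ∧ S ω = 1) → 0 < pr P (fun ω => X ω = x ∧ S ω = 0) →
      cexp P Y00 (fun ω => X ω = x ∧ S ω = 1) ≠ 0 ∧ cexp P Y00 (fun ω => X ω = x ∧ S ω = 0) ≠ 0 ∧
      cexp P Y10 (fun ω => X ω = x ∧ S ω = 1) ≠ 0 ∧ cexp P Y02 (fun ω => X ω = x ∧ S ω = 0) ≠ 0 ∧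
      cexp P Y (fun ω => X ω = x ∧ S ω = 0 ∧ A ω = 0) ≠ 0)
    : cexp P Y12 (fun ω => S ω = 1) =
      ∑ x ∈ univ.filter (fun x => 0 < pr P (fun ω => X ω = x ∧ S ω = 1)),
        cexp P Y (fun ω => X ω = x ∧ S ω = 1 ∧ A ω = 0) * (cexp P Y (fun ω => X ω = x ∧ S ω = 0 ∧ A ω = 2) / cexp P Y (fun ω => X ω = x ∧ S ω = 0 ∧ A ω = 0)) * (pr P (fun ω => X ω = x ∧ S ω = 1) / pr P (fun ω => S ω = 1)) := by
  have key : ∀ x, 0 < pr P (fun ω => X ω = x ∧ S ω = 1) →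
      cexp P Y12 (fun ω => X ω = x ∧ S ω = 1) =
      cexp P Y (fun ω => X ω = x ∧ S ω = 1 ∧ A ω = 0) *
      (cexp P Y (fun ω => X ω = x ∧ S ω = 0 ∧ A ω = 2) /
       cexp P Y (fun ω => X ω = x ∧ S ω = 0 ∧ A ω = 0)) := by
    intro x hx1
    have hcpr := hextpos x hx1
    have hn : pr P (fun ω => S ω = 0 ∧ X ω = x) ≠ 0 := by
      intro h
      rw [cpr, h, zero_div] at hcpr
      exact lt_irrefl 0 hcpr
    have hx0 : 0 < pr P (fun ω => X ω = x ∧ S ω = 0) := by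
      refine lt_of_le_of_ne (pr_nonneg P hP _) (Ne.symm ?_)
      rw [pr_congr P (fun ω => and_comm)]
      exact hn
    obtain ⟨h1, h2, h3, h4, h5⟩ := hne x hx1 hx0
    have e10 : cexp P Y10 (fun ω => X ω = x ∧ S ω = 1) =
        cexp P Y (fun ω => X ω = x ∧ S ω = 1 ∧ A ω = 0) := by
      rw [hexch10 x hx1]
      exact cexp_congr P Y10 Y (fun ω => Iff.rfl) (fun ω h => hcons10 ω h.2.1 h.2.2)
    have e00 : cexp P Y00 (fun ω => X ω = x ∧ S ω = 0) =
        cexp P Y (fun ω => X ω = x ∧ S ω = 0 ∧ A ω = 0) := by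
      rw [hexch00 x hx0]
      exact cexp_congr P Y00 Y (fun ω => Iff.rfl) (fun ω h => hcons00 ω h.2.1 h.2.2)
    have e02 : cexp P Y02 (fun ω => X ω = x ∧ S ω = 0) =
        cexp P Y (fun ω => X ω = x ∧ S ω = 0 ∧ A ω = 2) := by
      rw [hexch02 x hx0]
      exact cexp_congr P Y02 Y (fun ω => Iff.rfl) (fun ω h => hcons02 ω h.2.1 h.2.2)
    have r : cexp P Y12 (fun ω => X ω = x ∧ S ω = 1) / cexp P Y10 (fun ω => X ω = x ∧ S ω = 1) =
        cexp P Y02 (fun ω => X ω = x ∧ S ω = 0) / cexp P Y00 (fun ω => X ω = x ∧ S ω = 0) := by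
      rw [hnointer x hx1 hx0, htransratio x hx1 hx0]
    have := (div_eq_iff h3).1 r
    rw [this, e10, e02, e00, mul_comm]
  have hS1' : pr P (fun ω => S ω = 1) ≠ 0 := ne_of_gt hS1
  have step1 : wsum P Y12 (fun ω => S ω = 1) =
      ∑ x : 𝓧, wsum P Y12 (fun ω => X ω = x ∧ S ω = 1) := by
    unfold wsum
    rw [Finset.sum_comm]
    refine Finset.sum_congr rfl fun ω _ => ?_
    by_cases hs : S ω = 1
    · simp [hs, Finset.sum_ite_eq']
    · simp [hs]
  have step2 : (∑ x : 𝓧, wsum P Y12 (fun ω => X ω = x ∧ S ω = 1)) =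
      ∑ x ∈ univ.filter (fun x => 0 < pr P (fun ω => X ω = x ∧ S ω = 1)),
        wsum P Y12 (fun ω => X ω = x ∧ S ω = 1) := by
    symm
    refine Finset.sum_subset (Finset.filter_subset _ _) ?_
    intro x _ hx
    simp only [Finset.mem_filter, Finset.mem_univ, true_and, not_lt] at hx
    have hz : pr P (fun ω => X ω = x ∧ S ω = 1) = 0 :=
      le_antisymm hx (pr_nonneg P hP _)
    refine Finset.sum_eq_zero fun ω _ => ?_
    by_cases he : X ω = x ∧ S ω = 1
    · rw [if_pos he, P_eq_zero_of_pr_zero P hP hz ω he, mul_zero]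
    · rw [if_neg he]
  rw [cexp_eq, step1, step2, Finset.sum_div]
  refine Finset.sum_congr rfl fun x hx => ?_
  simp only [Finset.mem_filter, Finset.mem_univ, true_and] at hx
  have hnum : wsum P Y12 (fun ω => X ω = x ∧ S ω = 1) =
      cexp P Y12 (fun ω => X ω = x ∧ S ω = 1) * pr P (fun ω => X ω = x ∧ S ω = 1) := by
    rw [cexp_eq, div_mul_cancel₀ _ (ne_of_gt hx)]
  rw [hnum, key x hx]
  ring
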